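/- For real numbers $v_0 \ge 0$, $v_6 \ge 0$, $v_1$, the binary sextic form $\hat f(x_1,x_2) = v_0 x_1^6 + 6 v_1 x_1^5 x_2 + v_6 x_2^6$ is nonnegative for all $(x_1,x_2) \in \mathbb{R}^2$ if and only if $|v_1| \le (v_0/5)^{5/6} v_6^{1/6}$. -/

import Mathlib

open Real

private lemma rt_pow {a : ℝ} (ha : 0 ≤ a) {n : ℕ} (hn : n ≠ 0) :
    (a ^ ((n : ℝ)⁻¹)) ^ n = a := Real.rpow_inv_natCast_pow ha hn

private lemma pow6_rpow (x : ℝ) : (x ^ 6 : ℝ) ^ ((5 : ℝ) / 6) = |x| ^ 5 := by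
  have h6 : (x : ℝ) ^ 6 = |x| ^ 6 := by
    rw [← abs_pow]; exact (abs_of_nonneg (by positivity)).symm
  rw [h6, ← Real.rpow_natCast |x| 6, ← Real.rpow_mul (abs_nonneg x)]
  norm_num

private lemma pow6_rpow' (x : ℝ) : (x ^ 6 : ℝ) ^ ((1 : ℝ) / 6) = |x| := by
  have h6 : (x : ℝ) ^ 6 = |x| ^ 6 := by
    rw [← abs_pow]; exact (abs_of_nonneg (by positivity)).symm
  rw [h6, ← Real.rpow_natCast |x| 6, ← Real.rpow_mul (abs_nonneg x)]
  norm_num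

private lemma key (v0 v6 x1 x2 : ℝ) (hv0 : 0 ≤ v0) (hv6 : 0 ≤ v6) :
    6 * ((v0 / 5) ^ ((5 : ℝ) / 6) * v6 ^ ((1 : ℝ) / 6)) * (|x1| ^ 5 * |x2|) ≤
      v0 * x1 ^ 6 + v6 * x2 ^ 6 := by
  have ha : (0:ℝ) ≤ (v0 / 5) * x1 ^ 6 := by positivity
  have hb : (0:ℝ) ≤ v6 * x2 ^ 6 := by positivity
  have h := Real.geom_mean_le_arith_mean2_weighted (by norm_num : (0:ℝ) ≤ 5/6)
    (by norm_num : (0:ℝ) ≤ 1/6) ha hb (by norm_num)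
  have e1 : ((v0 / 5) * x1 ^ 6) ^ ((5:ℝ)/6) = (v0/5) ^ ((5:ℝ)/6) * |x1| ^ 5 := by
    rw [Real.mul_rpow (by positivity) (by positivity), pow6_rpow]
  have e2 : (v6 * x2 ^ 6) ^ ((1:ℝ)/6) = v6 ^ ((1:ℝ)/6) * |x2| := by
    rw [Real.mul_rpow hv6 (by positivity), pow6_rpow']
  rw [e1, e2] at h
  nlinarith [h]

theorem stmt_0 (v0 v1 v6 : ℝ) (hv0 : 0 ≤ v0) (hv6 : 0 ≤ v6) :
    (∀ x1 x2 : ℝ, 0 ≤ v0 * x1 ^ 6 + 6 * v1 * x1 ^ 5 * x2 + v6 * x2 ^ 6) ↔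
      |v1| ≤ (v0 / 5) ^ ((5 : ℝ) / 6) * v6 ^ ((1 : ℝ) / 6) := by
  constructor
  · intro h
    rcases eq_or_ne v1 0 with rfl | hv1
    · simp only [abs_zero]
      positivity
    have habs : 0 < |v1| := abs_pos.mpr hv1
    rcases eq_or_lt_of_le hv6 with hv6' | hv6'
    · -- v6 = 0 : show v1 = 0, contradiction
      exfalso
      have := h 1 (-(v0 + 1) / (6 * v1))
      rw [← hv6'] at this
      have h6 : (6:ℝ) * v1 ≠ 0 := by
        intro hc; exact hv1 (by linarith [mul_eq_zero.mp hc |>.resolve_left (by norm_num)])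
      field_simp at this
      have hp : 0 < v1 ^ 6 := Even.pow_pos (by norm_num) hv1
      rw [le_div_iff₀ hp] at this
      nlinarith [this]
    rcases eq_or_lt_of_le hv0 with hv0' | hv0'
    · -- v0 = 0 : show v1 = 0, contradiction
      exfalso
      set t : ℝ := -(v1 / |v1|) * ((v6 + 1) / (6 * |v1|)) ^ ((5:ℝ)⁻¹) with ht
      have hbpos : (0:ℝ) ≤ (v6 + 1) / (6 * |v1|) := by positivity
      have ht5 : t ^ 5 = -(v1 ^ 5 / |v1| ^ 5) * ((v6 + 1) / (6 * |v1|)) := by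
        rw [ht, mul_pow, neg_pow, div_pow]
        have : (((v6 + 1) / (6 * |v1|)) ^ ((5:ℝ)⁻¹)) ^ 5 = (v6 + 1) / (6 * |v1|) := by
          have := rt_pow hbpos (n := 5) (by norm_num)
          simpa using this
        rw [this]
        ring
      have hp6 : v1 ^ 6 = |v1| ^ 6 := by
        rw [← abs_pow]; exact (abs_of_nonneg (by positivity)).symm
      have h5 : v1 * (v1 ^ 5 / |v1| ^ 5) = |v1| := by
        field_simp
        linear_combination hp6
      have hv16 : v1 * t ^ 5 = -(v6 + 1) / 6 := by
        calc v1 * t ^ 5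
            = (v1 * (v1 ^ 5 / |v1| ^ 5)) * (-((v6 + 1) / (6 * |v1|))) := by rw [ht5]; ring
          _ = |v1| * (-((v6 + 1) / (6 * |v1|))) := by rw [h5]
          _ = -(v6 + 1) / 6 := by field_simp
      have := h t 1
      rw [← hv0'] at this
      nlinarith [this, hv16]
    · -- v0 > 0, v6 > 0
      set A : ℝ := v0 / 5 with hA
      have hApos : 0 < A := by positivity
      set c : ℝ := (A / v6) ^ ((1:ℝ)/6) with hc
      have hcpos : 0 < c := Real.rpow_pos_of_pos (by positivity) _
      set x2 : ℝ := -(v1 / |v1|) * c with hx2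
      have hc6 : c ^ 6 = A / v6 := by
        rw [hc]
        have := rt_pow (a := A / v6) (by positivity) (n := 6) (by norm_num)
        rw [show ((6:ℕ):ℝ)⁻¹ = (1:ℝ)/6 by norm_num] at this
        exact this
      have hp6 : v1 ^ 6 = |v1| ^ 6 := by
        rw [← abs_pow]; exact (abs_of_nonneg (by positivity)).symm
      have hx26 : x2 ^ 6 = A / v6 := by
        rw [hx2, mul_pow, neg_pow, div_pow, hc6, hp6,
          div_self (pow_ne_zero 6 habs.ne')]
        norm_num
      have hsq : v1 ^ 2 = |v1| ^ 2 := (sq_abs v1).symm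
      have hv1x2 : v1 * x2 = -(|v1| * c) := by
        rw [hx2]
        field_simp
        linear_combination (-1) * hsq
      have hmain := h 1 x2
      rw [one_pow] at hmain
      have hval : v6 * x2 ^ 6 = A := by
        rw [hx26]; field_simp
      have hineq : |v1| * c ≤ A := by nlinarith [hmain, hv1x2, hval]
      have hv6r : v6 ^ ((1:ℝ)/6) ≠ 0 := ne_of_gt (Real.rpow_pos_of_pos hv6' _)
      have hcval : (A ^ ((5:ℝ)/6) * v6 ^ ((1:ℝ)/6)) * c = A := by
        rw [hc, Real.div_rpow (le_of_lt hApos) hv6]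
        have e : A ^ ((5:ℝ)/6) * v6 ^ ((1:ℝ)/6) * (A ^ ((1:ℝ)/6) / v6 ^ ((1:ℝ)/6)) =
            A ^ ((5:ℝ)/6) * A ^ ((1:ℝ)/6) * (v6 ^ ((1:ℝ)/6) / v6 ^ ((1:ℝ)/6)) := by ring
        rw [e, div_self hv6r, mul_one, ← Real.rpow_add hApos]
        norm_num
      have h2 : |v1| * c ≤ (A ^ ((5:ℝ)/6) * v6 ^ ((1:ℝ)/6)) * c := hineq.trans_eq hcval.symm
      exact le_of_mul_le_mul_right h2 hcpos
  · intro h x1 x2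
    have hkey := key v0 v6 x1 x2 hv0 hv6
    have habs : |v1 * (x1 ^ 5 * x2)| = |v1| * (|x1| ^ 5 * |x2|) := by
      rw [abs_mul, abs_mul, abs_pow]
    have h1 : -(|v1| * (|x1| ^ 5 * |x2|)) ≤ v1 * (x1 ^ 5 * x2) := by
      rw [← habs]; exact neg_abs_le _
    have h2 : |v1| * (|x1| ^ 5 * |x2|) ≤
        ((v0 / 5) ^ ((5:ℝ)/6) * v6 ^ ((1:ℝ)/6)) * (|x1| ^ 5 * |x2|) := by
      apply mul_le_mul_of_nonneg_right h (by positivity)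
    nlinarith [hkey, h1, h2]
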